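/- Let f : Y → X be a quasifinite morphism of finite type between locally noetherian schemes. Then for every closed subset Z ⊂ Y, one has codim(f(Z), X) ≥ codim(Z, Y). -/

import Mathlib

open CategoryTheory AlgebraicGeometry TopologicalSpace Opposite

universe u

/-- The codimension of a set of points of a scheme: the infimum over `z ∈ Z` of the
Krull dimension of the local ring at `z`. -/
noncomputable def setCodim (X : Scheme.{u}) (Z : Set X) : WithBot ℕ∞ :=
  ⨅ z ∈ Z, ringKrullDim (X.presheaf.stalk z)

section Auxiliary

open Ideal

lemma primes_over_infinite {A B : Type u} [CommRing A] [CommRing B] (φ : A →+* B)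
    (hft : φ.FiniteType) {q q' : Ideal B} (hq : q.IsPrime) (hq' : q'.IsPrime)
    (hlt : q < q') (hcomap : q.comap φ = q'.comap φ) :
    {r : PrimeSpectrum B | r.asIdeal.comap φ = q.comap φ}.Infinite := by
  classical
  set p : Ideal A := q.comap φ with hp
  haveI hpP : p.IsPrime := hq.comap φ
  haveI := hq
  haveI := hq'
  -- quotients
  set Abar := A ⧸ p
  set Bbar := B ⧸ q
  set φbar : Abar →+* Bbar := Ideal.quotientMap q φ le_rfl with hφbar
  -- multiplicative sets
  set M₀ : Submonoid Abar := p.primeCompl.map (Ideal.Quotient.mk p) with hM₀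
  set M' : Submonoid Bbar := M₀.map φbar with hM'
  set F := Localization M₀
  set C := Localization M'
  -- membership characterizations
  have hmemM₀ : ∀ x : Abar, x ∈ M₀ ↔ ∃ a ∉ p, Ideal.Quotient.mk p a = x := by
    intro x
    constructor
    · rintro ⟨a, ha, rfl⟩; exact ⟨a, ha, rfl⟩
    · rintro ⟨a, ha, rfl⟩; exact ⟨a, ha, rfl⟩
  have hmemM' : ∀ x : Bbar, x ∈ M' ↔ ∃ a ∉ p, Ideal.Quotient.mk q (φ a) = x := by
    intro x
    constructor
    · rintro ⟨y, hy, rfl⟩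
      obtain ⟨a, ha, rfl⟩ := (hmemM₀ y).1 hy
      exact ⟨a, ha, (Ideal.quotientMap_mk).symm⟩
    · rintro ⟨a, ha, rfl⟩
      exact ⟨Ideal.Quotient.mk p a, (hmemM₀ _).2 ⟨a, ha, rfl⟩, Ideal.quotientMap_mk⟩
  -- domains
  haveI : IsDomain Abar := Ideal.Quotient.isDomain p
  haveI : IsDomain Bbar := Ideal.Quotient.isDomain q
  -- M₀ is the set of nonzero elements of Abar
  have hM₀eq : M₀ = nonZeroDivisors Abar := by
    ext x
    rw [hmemM₀ x, mem_nonZeroDivisors_iff_ne_zero]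
    constructor
    · rintro ⟨a, ha, rfl⟩
      exact fun h => ha (Ideal.Quotient.eq_zero_iff_mem.mp h)
    · intro hx
      obtain ⟨a, rfl⟩ := Ideal.Quotient.mk_surjective x
      exact ⟨a, fun h => hx (Ideal.Quotient.eq_zero_iff_mem.mpr h), rfl⟩
  haveI : IsFractionRing Abar F := by
    unfold F
    rw [IsFractionRing, ← hM₀eq]
    infer_instance
  letI : Field F := IsFractionRing.toField Abar
  haveI : IsArtinianRing F := DivisionRing.instIsArtinianRing
  haveI : IsJacobsonRing F := isJacobsonRing_iff_prime_eq.mpr fun P _ ↦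
    Ideal.jacobson_eq_self_of_isMaximal (H := IsArtinianRing.isMaximal_of_isPrime P)
  -- M' consists of nonzerodivisors
  have hM'le : M' ≤ nonZeroDivisors Bbar := by
    intro x hx
    obtain ⟨a, ha, rfl⟩ := (hmemM' x).1 hx
    rw [mem_nonZeroDivisors_iff_ne_zero]
    exact fun h => ha (by rw [hp, Ideal.mem_comap]; exact Ideal.Quotient.eq_zero_iff_mem.mp h)
  haveI : IsDomain C := IsLocalization.isDomain_localization hM'le
  -- finite type
  have hφbarft : φbar.FiniteType := by
    apply RingHom.FiniteType.of_comp_finiteType (f := Ideal.Quotient.mk p)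
    rw [hφbar, Ideal.quotientMap_comp_mk]
    exact RingHom.FiniteType.comp (RingHom.FiniteType.of_surjective _
      Ideal.Quotient.mk_surjective) hft
  have hψft : (IsLocalization.map C φbar (Submonoid.le_comap_map M₀) : F →+* C).FiniteType :=
    RingHom.finiteType_localizationPreserves φbar M₀ F C hφbarft
  haveI : IsJacobsonRing C := hψft.isJacobsonRing
  -- primes of C give primes of B lying over p
  set ι : PrimeSpectrum C → PrimeSpectrum B :=
    (PrimeSpectrum.comap (Ideal.Quotient.mk q)) ∘ (PrimeSpectrum.comap (algebraMap Bbar C))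
    with hι
  have hιinj : Function.Injective ι :=
    (PrimeSpectrum.comap_injective_of_surjective _ Ideal.Quotient.mk_surjective).comp
      (PrimeSpectrum.localization_comap_injective C M')
  have hιmem : ∀ r : PrimeSpectrum C, (ι r).asIdeal.comap φ = q.comap φ := by
    intro r
    apply le_antisymm
    · intro a ha
      by_contra hap
      have hm : Ideal.Quotient.mk q (φ a) ∈ M' := (hmemM' _).2 ⟨a, hap, rfl⟩
      have hmem : algebraMap Bbar C (Ideal.Quotient.mk q (φ a)) ∈ r.asIdeal := ha
      exact r.2.ne_top (r.asIdeal.eq_top_of_isUnit_mem hmem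
        (IsLocalization.map_units C ⟨_, hm⟩))
    · intro a ha
      show algebraMap Bbar C (Ideal.Quotient.mk q (φ a)) ∈ r.asIdeal
      have : Ideal.Quotient.mk q (φ a) = 0 := Ideal.Quotient.eq_zero_iff_mem.mpr ha
      rw [this, map_zero]
      exact r.asIdeal.zero_mem
  by_contra hS'
  rw [Set.not_infinite] at hS'
  have hS := hS'
  haveI : Finite (PrimeSpectrum C) := by
    haveI := hS.to_subtype
    exact Finite.of_injective
      (fun r => (⟨ι r, hιmem r⟩ : {r : PrimeSpectrum B | r.asIdeal.comap φ = p}))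
      (fun a b h => hιinj (congrArg Subtype.val h))
  have hMS : {m : Ideal C | m.IsMaximal}.Finite := by
    haveI : Finite {m : Ideal C | m.IsMaximal} := Finite.of_injective
      (fun m => (⟨m.1, m.2.isPrime⟩ : PrimeSpectrum C))
      (fun a b h => Subtype.ext (congrArg PrimeSpectrum.asIdeal h))
    exact Set.toFinite _
  -- Jacobson: the intersection of all maximal ideals is ⊥
  have hjac : (⊥ : Ideal C).jacobson = ⊥ :=
    ‹IsJacobsonRing C›.out (Ideal.IsPrime.isRadical Ideal.bot_prime)
  have hsInf : sInf {m : Ideal C | m.IsMaximal} = ⊥ := by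
    rw [Ideal.jacobson] at hjac
    simpa using hjac
  have hbot : (⊥ : Ideal C).IsMaximal := by
    have hle : hMS.toFinset.inf id ≤ (⊥ : Ideal C) := by
      rw [Finset.inf_id_eq_sInf, hMS.coe_toFinset, hsInf]
    obtain ⟨m, hm, hmle⟩ := (Ideal.IsPrime.inf_le' Ideal.bot_prime).mp hle
    have hmbot : m = ⊥ := le_bot_iff.mp hmle
    exact hmbot ▸ (hMS.mem_toFinset.mp hm)
  -- but q' gives a nonzero proper prime of C, contradiction
  set q'bar : Ideal Bbar := q'.map (Ideal.Quotient.mk q) with hq'bar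
  have hker : RingHom.ker (Ideal.Quotient.mk q) ≤ q' := by
    rw [Ideal.mk_ker]; exact hlt.le
  haveI hq'barP : q'bar.IsPrime := Ideal.map_isPrime_of_surjective
    Ideal.Quotient.mk_surjective hker
  have hq'barcomap : q'bar.comap (Ideal.Quotient.mk q) = q' := by
    rw [hq'bar, Ideal.comap_map_of_surjective _ Ideal.Quotient.mk_surjective]
    rw [← RingHom.ker_eq_comap_bot, Ideal.mk_ker]
    exact sup_eq_left.mpr hlt.le
  have hdisj : Disjoint (M' : Set Bbar) (q'bar : Set Bbar) := by
    rw [Set.disjoint_left]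
    rintro x hx hx'
    obtain ⟨a, ha, rfl⟩ := (hmemM' x).1 hx
    have hmem : φ a ∈ q' := by rw [← hq'barcomap]; exact hx'
    exact ha (by rw [hcomap]; exact Ideal.mem_comap.mpr hmem)
  set Q : Ideal C := q'bar.map (algebraMap Bbar C) with hQ
  haveI hQP : Q.IsPrime := IsLocalization.isPrime_of_isPrime_disjoint M' C q'bar hq'barP hdisj
  obtain ⟨b, hbq', hbq⟩ := SetLike.exists_of_lt hlt
  have hQne : Q ≠ ⊥ := by
    intro h
    have hmem : algebraMap Bbar C (Ideal.Quotient.mk q b) ∈ Q :=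
      Ideal.mem_map_of_mem _ (Ideal.mem_map_of_mem _ hbq')
    rw [h, Ideal.mem_bot] at hmem
    have h0 : Ideal.Quotient.mk q b = 0 :=
      IsLocalization.injective C hM'le (by rw [map_zero]; exact hmem)
    exact hbq (Ideal.Quotient.eq_zero_iff_mem.mp h0)
  exact hQne ((hbot.eq_of_le hQP.ne_top bot_le).symm)

end Auxiliary

lemma eq_of_specializes_of_fiber_finite {Y X : Scheme.{u}} (f : Y ⟶ X) [LocallyOfFiniteType f]
    {y y' : Y} (hspec : y ⤳ y') (hfib : f.base y = f.base y')
    (hfin : (f.base ⁻¹' {f.base y'}).Finite) : y = y' := by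
  by_contra hne
  obtain ⟨_, ⟨U, hU, rfl⟩, hx'U, -⟩ :=
    X.isBasis_affineOpens.exists_subset_of_mem_open (Set.mem_univ (f.base y')) isOpen_univ
  obtain ⟨_, ⟨V, hV, rfl⟩, hy'V, hVU⟩ :=
    Y.isBasis_affineOpens.exists_subset_of_mem_open (show y' ∈ (f ⁻¹ᵁ U : Set Y) from hx'U)
      (f ⁻¹ᵁ U).2
  have hVU' : V ≤ f ⁻¹ᵁ U := hVU
  have hyV : y ∈ V := hspec.mem_open V.2 hy'V
  set ψ := f.appLE U V hVU' with hψ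
  have hψft : RingHom.FiniteType ψ.hom :=
    HasRingHomProperty.appLE (P := @LocallyOfFiniteType) f ‹_› ⟨U, hU⟩ ⟨V, hV⟩ hVU'
  have hcomm : Spec.map ψ ≫ hU.fromSpec = hV.fromSpec ≫ f :=
    IsAffineOpen.SpecMap_appLE_fromSpec f hU hV hVU'
  have hkey : ∀ r, hU.fromSpec.base ((Spec.map ψ).base r) = f.base (hV.fromSpec.base r) := by
    intro r
    rw [← Scheme.Hom.comp_apply, hcomm, Scheme.Hom.comp_apply]
  obtain ⟨py, hpy⟩ : ∃ py, hV.fromSpec.base py = y := by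
    rw [← Set.mem_range, hV.range_fromSpec]; exact hyV
  obtain ⟨py', hpy'⟩ : ∃ py', hV.fromSpec.base py' = y' := by
    rw [← Set.mem_range, hV.range_fromSpec]; exact hy'V
  haveI := hV.isOpenImmersion_fromSpec
  haveI := hU.isOpenImmersion_fromSpec
  have hVinj := hV.fromSpec.isEmbedding.injective
  have hUinj := hU.fromSpec.isEmbedding.injective
  have hspec' : py ⤳ py' :=
    hV.fromSpec.isEmbedding.isInducing.specializes_iff.mp (by rw [hpy, hpy']; exact hspec)
  have hplt : py.asIdeal < py'.asIdeal := by
    refine lt_of_le_of_ne ((PrimeSpectrum.le_iff_specializes _ _).mpr hspec') fun h => ?_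
    exact hne (by rw [← hpy, ← hpy', PrimeSpectrum.ext h])
  have heq : (Spec.map ψ).base py = (Spec.map ψ).base py' :=
    hUinj (by rw [hkey, hkey, hpy, hpy', hfib])
  have hcomap' : py.asIdeal.comap ψ.hom = py'.asIdeal.comap ψ.hom := by
    have := congrArg PrimeSpectrum.asIdeal heq
    rwa [Spec.map_apply, Spec.map_apply] at this
  have hinf := primes_over_infinite (φ := (ψ.hom : Γ(X, U) →+* Γ(Y, V))) hψft py.2 py'.2 hplt hcomap'
  have hsub : hV.fromSpec.base '' {r : PrimeSpectrum Γ(Y, V) | r.asIdeal.comap ψ.hom = py.asIdeal.comap ψ.hom}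
      ⊆ f.base ⁻¹' {f.base y'} := by
    rintro _ ⟨r, hr, rfl⟩
    have : (Spec.map ψ).base r = (Spec.map ψ).base py := by
      rw [Spec.map_apply, Spec.map_apply]
      exact PrimeSpectrum.ext hr
    simp only [Set.mem_preimage, Set.mem_singleton_iff]
    rw [← hkey r, this, hkey py, hpy, hfib]
  exact hfin.not_infinite ((hinf.image (hVinj.injOn)).mono hsub)

lemma stalk_krullDim_le {Y X : Scheme.{u}} (f : Y ⟶ X) [LocallyOfFiniteType f]
    (hqf : ∀ x : X, (f.base ⁻¹' {x}).Finite) (z : Y) :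
    ringKrullDim (Y.presheaf.stalk z) ≤ ringKrullDim (X.presheaf.stalk (f.base z)) := by
  rw [ringKrullDim, ringKrullDim]
  apply Order.krullDim_le_of_strictMono (fun r => PrimeSpectrum.comap (f.stalkMap z).hom r)
  intro a b hab
  have hle : PrimeSpectrum.comap (f.stalkMap z).hom a ≤ PrimeSpectrum.comap (f.stalkMap z).hom b :=
    Ideal.comap_mono hab.le
  refine lt_of_le_of_ne hle fun heq' => ?_
  replace heq : PrimeSpectrum.comap (f.stalkMap z).hom a = PrimeSpectrum.comap (f.stalkMap z).hom b := heq'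
  have hkey : ∀ r, (X.fromSpecStalk (f.base z)).base ((Spec.map (f.stalkMap z)).base r)
      = f.base ((Y.fromSpecStalk z).base r) := by
    intro r
    rw [← Scheme.Hom.comp_apply, Scheme.SpecMap_stalkMap_fromSpecStalk, Scheme.Hom.comp_apply]
  have hspec : (Y.fromSpecStalk z).base a ⤳ (Y.fromSpecStalk z).base b :=
    ((PrimeSpectrum.le_iff_specializes a b).mp hab.le).map (Y.fromSpecStalk z).continuous
  have hfib : f.base ((Y.fromSpecStalk z).base a) = f.base ((Y.fromSpecStalk z).base b) := by
    rw [← hkey a, ← hkey b]; exact congrArg _ heq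
  have := eq_of_specializes_of_fiber_finite f hspec hfib (hqf _)
  exact hab.ne ((Y.fromSpecStalk z).isEmbedding.injective this)

/-- For a quasifinite morphism of finite type between locally noetherian schemes,
the codimension of the image of a closed subset is at least the codimension of
the subset: `codim(f(Z), X) ≥ codim(Z, Y)`. -/
theorem codim_image_ge_of_quasifinite {Y X : Scheme.{u}}
    [IsLocallyNoetherian X] [IsLocallyNoetherian Y]
    (f : Y ⟶ X) [LocallyOfFiniteType f]
    (hqf : ∀ x : X, (f.base ⁻¹' {x}).Finite)
    (Z : Set Y) (hZ : IsClosed Z) :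
    setCodim Y Z ≤ setCodim X (f.base '' Z) := by
  rw [setCodim, setCodim]
  refine le_iInf₂ fun x hx => ?_
  obtain ⟨z, hz, rfl⟩ := hx
  exact le_trans (iInf₂_le z hz) (stalk_krullDim_le f hqf z)
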